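/- Let T : X → X satisfy the convex contraction condition of order m: there exist nonnegative reals a_0,…,a_{m−1} with α = ∑ a_i < 1 such that d(T^m x, T^m y) ≤ ∑_{i=0}^{m−1} a_i · d(T^i x, T^i y) for all x,y in a suprametric space (X,d). Fix x_0 ∈ X and set x_n = T^n x_0 and μ = ∑_{i=0}^{m−1} d(x_i, x_{i+1}). Then for all n ≥ m, d(x_n, x_{n+1}) ≤ α^⌊n/m⌋ · μ. In particular d(x_n, x_{n+1}) → 0 as n → ∞. -/

import Mathlib

open Filter Topology

structure IsSuprametric {X : Type*} (d : X → X → ℝ) (ρ : ℝ) : Prop where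
  nonneg : ∀ x y, 0 ≤ d x y
  eq_zero_iff : ∀ x y, d x y = 0 ↔ x = y
  symm : ∀ x y, d x y = d y x
  triangle : ∀ x y z, d x y ≤ d x z + d z y + ρ * d x z * d z y

def IsCauchySeq {X : Type*} (d : X → X → ℝ) (x : ℕ → X) : Prop :=
  ∀ ε > 0, ∃ N, ∀ m ≥ N, ∀ n ≥ N, d (x m) (x n) < ε

def ConvergesTo {X : Type*} (d : X → X → ℝ) (x : ℕ → X) (z : X) : Prop :=
  Tendsto (fun n => d (x n) z) atTop (𝓝 0)

def IsCompleteSupra {X : Type*} (d : X → X → ℝ) : Prop :=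
  ∀ x : ℕ → X, IsCauchySeq d x → ∃ z, ConvergesTo d x z

theorem stmt5 {X : Type*} (d : X → X → ℝ) (ρ : ℝ) (hρ : 0 ≤ ρ)
    (hd : IsSuprametric d ρ) (T : X → X) (m : ℕ) (hm : 1 ≤ m)
    (a : ℕ → ℝ) (ha : ∀ i, 0 ≤ a i)
    (hα : ∑ i ∈ Finset.range m, a i < 1)
    (hconv : ∀ x y, d (T^[m] x) (T^[m] y) ≤
        ∑ i ∈ Finset.range m, a i * d (T^[i] x) (T^[i] y))
    (x0 : X) :
    (∀ n, m ≤ n → d (T^[n] x0) (T^[n + 1] x0) ≤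
        (∑ i ∈ Finset.range m, a i) ^ (n / m) *
          ∑ i ∈ Finset.range m, d (T^[i] x0) (T^[i + 1] x0))
    ∧ Tendsto (fun n => d (T^[n] x0) (T^[n + 1] x0)) atTop (𝓝 0) := by
  set α := ∑ i ∈ Finset.range m, a i with hαdef
  set μ := ∑ i ∈ Finset.range m, d (T^[i] x0) (T^[i + 1] x0) with hμdef
  set D : ℕ → ℝ := fun n => d (T^[n] x0) (T^[n + 1] x0) with hDdef
  have hα0 : 0 ≤ α := Finset.sum_nonneg fun i _ => ha i
  have hα1 : α ≤ 1 := le_of_lt hα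
  have hμ0 : 0 ≤ μ := Finset.sum_nonneg fun i _ => hd.nonneg _ _
  have hDnonneg : ∀ n, 0 ≤ D n := fun n => hd.nonneg _ _
  have hm0 : 0 < m := hm
  have key : ∀ n, D n ≤ α ^ (n / m) * μ := by
    intro n
    induction n using Nat.strong_induction_on with
    | _ n ih =>
      rcases lt_or_ge n m with hlt | hge
      · rw [Nat.div_eq_of_lt hlt, pow_zero, one_mul]
        exact Finset.single_le_sum (f := fun i => d (T^[i] x0) (T^[i + 1] x0))
          (fun i _ => hd.nonneg _ _) (Finset.mem_range.2 hlt)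
      · have hn1 : 1 ≤ n / m := (Nat.one_le_div_iff hm0).2 hge
        have hrew : D n = d (T^[m] (T^[n - m] x0)) (T^[m] (T^[n - m + 1] x0)) := by
          simp only [hDdef, ← Function.iterate_add_apply]
          congr 2 <;> omega
        have step : D n ≤ ∑ i ∈ Finset.range m, a i * D (i + (n - m)) := by
          rw [hrew]
          refine (hconv _ _).trans (le_of_eq ?_)
          refine Finset.sum_congr rfl fun i _ => ?_
          simp only [hDdef, ← Function.iterate_add_apply]
          congr 2 <;> omega
        have hbound : ∀ i ∈ Finset.range m,
            a i * D (i + (n - m)) ≤ a i * (α ^ (n / m - 1) * μ) := by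
          intro i hi
          have hilt : i + (n - m) < n := by
            have := Finset.mem_range.1 hi; omega
          have h1 : D (i + (n - m)) ≤ α ^ ((i + (n - m)) / m) * μ := ih _ hilt
          have h2 : α ^ ((i + (n - m)) / m) ≤ α ^ (n / m - 1) := by
            apply pow_le_pow_of_le_one hα0 hα1
            have : (n - m) / m ≤ (i + (n - m)) / m := Nat.div_le_div_right (by omega)
            have hnm : n / m = (n - m) / m + 1 := by
              conv_lhs => rw [show n = (n - m) + m by omega]
              rw [Nat.add_div_right _ hm0]
            omega
          exact mul_le_mul_of_nonneg_left
            (h1.trans (mul_le_mul_of_nonneg_right h2 hμ0)) (ha i)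
        calc D n ≤ ∑ i ∈ Finset.range m, a i * D (i + (n - m)) := step
          _ ≤ ∑ i ∈ Finset.range m, a i * (α ^ (n / m - 1) * μ) :=
              Finset.sum_le_sum hbound
          _ = α * (α ^ (n / m - 1) * μ) := by rw [← Finset.sum_mul]
          _ = α ^ (n / m) * μ := by
              rw [← mul_assoc, ← pow_succ']
              congr 2
              omega
  refine ⟨fun n _ => key n, ?_⟩
  have hdiv : Tendsto (fun n : ℕ => n / m) atTop atTop :=
    Filter.tendsto_atTop.2 fun b => Filter.eventually_atTop.2
      ⟨b * m, fun n hn => (Nat.le_div_iff_mul_le hm0).2 hn⟩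
  have hpow : Tendsto (fun k : ℕ => α ^ k * μ) atTop (𝓝 0) := by
    have := (tendsto_pow_atTop_nhds_zero_of_lt_one hα0 hα).mul_const μ
    simpa using this
  exact squeeze_zero (fun n => hDnonneg n) (fun n => key n) (hpow.comp hdiv)
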